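/- Let f ∈ K[x_1,…,x_N] be a polynomial over a valued field K with valuation val, and let x(t) ∈ (K*)^N satisfy f(x(t)) = 0. Write x_i(t) = c_i t^{v_i}(1 + h_i) with c_i ∈ ℂ*, v_i = val(x_i), and val(h_i) > 0. Then the initial form in_v(f) (the sum of the terms of f achieving the minimum of val(c_α) + α·v over all monomials x^α of f, with coefficients replaced by their leading coefficients) vanishes at the leading coefficient vector c = (c_1,…,c_N). -/

import Mathlib

open HahnSeries in
lemma hahn_coeff_finset_sum {Γ R : Type*} [PartialOrder Γ] [AddCommMonoid R]
    {ι : Type*} (s : Finset ι) (f : ι → HahnSeries Γ R) (g : Γ) :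
    (∑ i ∈ s, f i).coeff g = ∑ i ∈ s, (f i).coeff g := by
  classical
  induction s using Finset.induction with
  | empty => simp
  | insert a s h ih => simp [Finset.sum_insert h, ih]

open HahnSeries in
lemma hahn_leadingCoeff_mul {x y : LaurentSeries ℂ} (hx : x ≠ 0) (hy : y ≠ 0) :
    (x * y).leadingCoeff = x.leadingCoeff * y.leadingCoeff := by
  rw [leadingCoeff_eq, order_mul hx hy, coeff_mul_order_add_order]

open HahnSeries in
lemma hahn_leadingCoeff_pow (x : LaurentSeries ℂ) (hx : x ≠ 0) (n : ℕ) :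
    (x ^ n).leadingCoeff = x.leadingCoeff ^ n := by
  induction n with
  | zero => simp [leadingCoeff_one]
  | succ n ih =>
    rw [pow_succ, hahn_leadingCoeff_mul (pow_ne_zero _ hx) hx, ih, pow_succ]

open HahnSeries in
lemma hahn_leadingCoeff_prod {ι : Type*} (s : Finset ι) (f : ι → LaurentSeries ℂ)
    (hf : ∀ i ∈ s, f i ≠ 0) :
    (∏ i ∈ s, f i).leadingCoeff = ∏ i ∈ s, (f i).leadingCoeff := by
  classical
  induction s using Finset.induction with
  | empty => simp [leadingCoeff_one]
  | @insert a s h ih =>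
    rw [Finset.prod_insert h, Finset.prod_insert h,
      hahn_leadingCoeff_mul (hf a (Finset.mem_insert_self a s))
        (Finset.prod_ne_zero_iff.2 fun i hi => hf i (Finset.mem_insert_of_mem hi)),
      ih (fun i hi => hf i (Finset.mem_insert_of_mem hi))]

open HahnSeries in
lemma hahn_order_prod {ι : Type*} (s : Finset ι) (f : ι → LaurentSeries ℂ)
    (hf : ∀ i ∈ s, f i ≠ 0) :
    (∏ i ∈ s, f i).order = ∑ i ∈ s, (f i).order := by
  classical
  induction s using Finset.induction with
  | empty => simp
  | @insert a s h ih =>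
    rw [Finset.prod_insert h, Finset.sum_insert h,
      order_mul (hf a (Finset.mem_insert_self a s))
        (Finset.prod_ne_zero_iff.2 fun i hi => hf i (Finset.mem_insert_of_mem hi)),
      ih (fun i hi => hf i (Finset.mem_insert_of_mem hi))]

/-- if `x(t) ∈ (K*)^N` is a zero of a polynomial
`f = ∑_{α ∈ S} c_α x^α` over the valued series field `K`, then the initial form
`in_v(f)` (the sum of the terms attaining `min_α (val c_α + α·v)`, with
coefficients replaced by their leading coefficients) vanishes at the leading
coefficient vector of `x(t)`.  Here `K` is the Laurent/Puiseux-type series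
field, `val` is the order and the leading coefficient of a nonzero series `a`
is `a.coeff a.order`. -/
theorem initial_form_vanishes_at_leading_coefficients
    {N : ℕ} (S : Finset ((Fin N) → ℕ)) (hS : S.Nonempty)
    (c : ((Fin N) → ℕ) → LaurentSeries ℂ) (hc : ∀ α ∈ S, c α ≠ 0)
    (x : Fin N → LaurentSeries ℂ) (hx : ∀ i, x i ≠ 0)
    (hzero : ∑ α ∈ S, c α * ∏ i, x i ^ α i = 0) :
    let v : Fin N → ℤ := fun i => (x i).order
    let wt : ((Fin N) → ℕ) → ℤ := fun α => (c α).order + ∑ i, (α i : ℤ) * v i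
    let m := S.inf' hS wt
    ∑ α ∈ S.filter (fun α => wt α = m),
        (c α).coeff (c α).order * ∏ i, ((x i).coeff (x i).order) ^ α i = 0 := by
  classical
  intro v wt m
  set term : ((Fin N) → ℕ) → LaurentSeries ℂ := fun α => c α * ∏ i, x i ^ α i with hterm
  have hterm_ne : ∀ α ∈ S, term α ≠ 0 := fun α hα =>
    mul_ne_zero (hc α hα) (Finset.prod_ne_zero_iff.2 fun i _ => pow_ne_zero _ (hx i))
  have horder : ∀ α ∈ S, (term α).order = wt α := by
    intro α hα
    rw [hterm]
    simp only
    rw [HahnSeries.order_mul (hc α hα)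
        (Finset.prod_ne_zero_iff.2 fun i _ => pow_ne_zero _ (hx i)),
      hahn_order_prod _ _ (fun i _ => pow_ne_zero _ (hx i))]
    simp [wt, v, zsmul_eq_mul]
  have hlc : ∀ α ∈ S, (term α).leadingCoeff =
      (c α).coeff (c α).order * ∏ i, ((x i).coeff (x i).order) ^ α i := by
    intro α hα
    rw [hterm]
    simp only
    rw [hahn_leadingCoeff_mul (hc α hα)
        (Finset.prod_ne_zero_iff.2 fun i _ => pow_ne_zero _ (hx i)),
      hahn_leadingCoeff_prod _ _ (fun i _ => pow_ne_zero _ (hx i))]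
    rw [HahnSeries.leadingCoeff_eq]
    congr 1
    exact Finset.prod_congr rfl fun i _ => by
      rw [hahn_leadingCoeff_pow (x i) (hx i), HahnSeries.leadingCoeff_eq]
  have key : (∑ α ∈ S, term α).coeff m = 0 := by rw [hzero]; simp
  rw [hahn_coeff_finset_sum] at key
  rw [← Finset.sum_filter_add_sum_filter_not S (fun α => wt α = m)] at key
  have h2 : ∑ α ∈ S.filter (fun α => ¬ wt α = m), (term α).coeff m = 0 := by
    apply Finset.sum_eq_zero
    intro α hα
    rw [Finset.mem_filter] at hα
    apply HahnSeries.coeff_eq_zero_of_lt_order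
    rw [horder α hα.1]
    exact lt_of_le_of_ne (Finset.inf'_le wt hα.1) (Ne.symm hα.2)
  rw [h2, add_zero] at key
  rw [← key]
  apply Finset.sum_congr rfl
  intro α hα
  rw [Finset.mem_filter] at hα
  rw [← hlc α hα.1, HahnSeries.leadingCoeff_eq, horder α hα.1, hα.2]
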